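/- arXiv:1212.4742 — 4 statements merged into one kernel-verified Lean document; each statement's English description precedes it below -/
import Mathlib

section
/- If H is a subgroup of G = Z_2^{*∞} that is invariant under all finite identifications of letters and under conjugation by letters, and H contains some element whose reduced word has odd length, then H = G. -/
noncomputable section

abbrev Z2 : Type := Multiplicative (ZMod 2)
abbrev FP : Type := Monoid.CoprodI (fun _ : ℕ => Z2)

def gen (i : ℕ) : FP := Monoid.CoprodI.of (i := i) (Multiplicative.ofAdd (1 : ZMod 2))

def par : FP →* Z2 := Monoid.CoprodI.lift (fun _ => MonoidHom.id Z2)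

/-- The subgroup of even-length words. -/
def Ev : Subgroup FP := par.ker

/-- Endomorphism of `FP` identifying letters according to `f`. -/
def ident (f : ℕ → ℕ) : FP →* FP :=
  Monoid.CoprodI.lift (fun i => (Monoid.CoprodI.of (M := fun _ : ℕ => Z2) (i := f i)))

/-- `f` moves only finitely many letters. -/
def FinSupp (f : ℕ → ℕ) : Prop := ∃ n, ∀ k ≥ n, f k = k

/-- S₀-invariance. -/
def S0Inv (H : Subgroup FP) : Prop :=
  (∀ f : ℕ → ℕ, FinSupp f → ∀ x ∈ H, ident f x ∈ H) ∧
  (∀ k : ℕ, ∀ x ∈ H, gen k * x * gen k ∈ H)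

/-- Length of the reduced word of `x`. -/
def wlen (x : FP) : ℕ := (Monoid.CoprodI.Word.equiv x).toList.length

/-- Number of occurrences of the letter `i` in the reduced word of `x`. -/
def occ (x : FP) (i : ℕ) : ℕ :=
  ((Monoid.CoprodI.Word.equiv x).toList.map Sigma.fst).count i

open Monoid.CoprodI in
lemma ident_gen (f : ℕ → ℕ) (i : ℕ) : ident f (gen i) = gen (f i) := by
  simp [ident, gen, Monoid.CoprodI.lift_of]

open Monoid.CoprodI in
lemma z2_cases' : ∀ m : Z2, m = 1 ∨ m = Multiplicative.ofAdd (1 : ZMod 2) := by decide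
lemma z2_cases (m : Z2) : m = 1 ∨ m = Multiplicative.ofAdd (1 : ZMod 2) := z2_cases' m

open Monoid.CoprodI in
lemma key (x : FP) (hodd : Odd (wlen x)) :
    ∃ f : ℕ → ℕ, FinSupp f ∧ ident f x = gen 0 := by
  classical
  set w := Monoid.CoprodI.Word.equiv x with hw
  set L := w.toList with hL
  set n : ℕ := (L.map Sigma.fst).foldr max 0 + 1 with hn
  have hlt : ∀ l ∈ L, l.1 < n := by
    intro l hl
    have : l.1 ≤ (L.map Sigma.fst).foldr max 0 := by
      have : l.1 ∈ L.map Sigma.fst := List.mem_map_of_mem hl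
      exact List.le_max_of_le (l := L.map Sigma.fst) this le_rfl
    omega
  set f : ℕ → ℕ := fun j => if j < n then 0 else j with hfdef
  refine ⟨f, ⟨n, fun k hk => by simp [hfdef, Nat.not_lt.2 hk]⟩, ?_⟩
  have hx : (L.map fun l => Monoid.CoprodI.of (i := l.1) l.2).prod = x := by
    have := Monoid.CoprodI.Word.equiv.symm_apply_apply x
    exact this
  rw [← hx, map_list_prod]
  have hmap : (L.map fun l => Monoid.CoprodI.of (i := l.1) l.2).map (ident f) =
      L.map fun l => Monoid.CoprodI.of (M := fun _ : ℕ => Z2) (i := 0) l.2 := by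
    rw [List.map_map]
    refine List.map_congr_left ?_
    intro l hl
    simp only [Function.comp_apply, ident, Monoid.CoprodI.lift_of, hfdef]
    rw [if_pos (hlt l hl)]
  rw [hmap]
  have hof : (L.map fun l => Monoid.CoprodI.of (M := fun _ : ℕ => Z2) (i := 0) l.2) =
      (L.map fun l => l.2).map (Monoid.CoprodI.of (M := fun _ : ℕ => Z2) (i := 0)) := by
    rw [List.map_map]; rfl
  rw [hof, ← map_list_prod]
  have hrep : (L.map fun l => (l.2 : Z2)) =
      List.replicate L.length (Multiplicative.ofAdd (1 : ZMod 2)) := by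
    refine List.eq_replicate_iff.2 ⟨by simp, ?_⟩
    intro b hb
    rcases List.mem_map.1 hb with ⟨l, hl, rfl⟩
    rcases z2_cases l.2 with h1 | h1
    · exact absurd h1 (w.ne_one l hl)
    · exact h1
  rw [hrep, List.prod_replicate]
  obtain ⟨m, hm⟩ := hodd
  have hlen : L.length = 2 * m + 1 := hm
  rw [hlen]
  have : (Multiplicative.ofAdd (1 : ZMod 2)) ^ (2 * m + 1) =
      Multiplicative.ofAdd (1 : ZMod 2) := by
    rw [pow_succ, pow_mul]
    have : (Multiplicative.ofAdd (1 : ZMod 2)) ^ 2 = 1 := by decide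
    rw [this, one_pow, one_mul]
  rw [this]; rfl

/-- An S₀-invariant subgroup of `FP = ℤ₂^{*∞}` containing an element whose reduced
word has odd length is all of `FP`. -/
theorem stmt2 (H : Subgroup FP) (hinv : S0Inv H)
    (x : FP) (hx : x ∈ H) (hodd : Odd (wlen x)) : H = ⊤ := by
  obtain ⟨f, hf, hfx⟩ := key x hodd
  have h0 : gen 0 ∈ H := hfx ▸ hinv.1 f hf x hx
  have hgen : ∀ i, gen i ∈ H := by
    intro i
    have := hinv.1 (fun j => if j = 0 then i else j) ⟨i + 1, fun k hk => by
      have : k ≠ 0 := by omega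
      simp [this]⟩ _ h0
    rwa [ident_gen] at this
  ext y
  simp only [Subgroup.mem_top, iff_true]
  induction y using Monoid.CoprodI.induction_on with
  | one => exact H.one_mem
  | of i m =>
    rcases z2_cases m with h | h
    · rw [h, map_one]; exact H.one_mem
    · rw [h]; exact hgen i
  | mul a b ha hb => exact H.mul_mem ha hb

end
end

section
/- If an S_0-invariant subgroup H ≤ E contains an element of the form a_i a_j with i ≠ j (a product of two distinct generators), then H = E. -/
noncomputable section

lemma gen_sq (k : ℕ) : gen k * gen k = 1 := by
  rw [gen, ← map_mul]
  have : (Multiplicative.ofAdd (1 : ZMod 2)) * Multiplicative.ofAdd 1 = 1 := by decide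
  rw [this, map_one]

/-- If an S₀-invariant subgroup `H ≤ Ev` contains a product of two distinct letters,
then `H = Ev`. -/
theorem stmt5 (H : Subgroup FP) (hle : H ≤ Ev) (hinv : S0Inv H)
    (h : ∃ i j : ℕ, i ≠ j ∧ gen i * gen j ∈ H) : H = Ev := by
  obtain ⟨i, j, hij, hmem⟩ := h
  have hpair : ∀ k l : ℕ, gen k * gen l ∈ H := by
    intro k l
    by_cases hkl : k = l
    · subst hkl; rw [gen_sq]; exact H.one_mem
    · set f : ℕ → ℕ := fun x => if x = i then k else if x = j then l else x with hf
      have hfs : FinSupp f := by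
        refine ⟨max i j + 1, fun m hm => ?_⟩
        have h1 : m ≠ i := by omega
        have h2 : m ≠ j := by omega
        simp [hf, h1, h2]
      have := hinv.1 f hfs _ hmem
      have heq : ident f (gen i * gen j) = gen k * gen l := by
        simp only [map_mul, ident, gen, Monoid.CoprodI.lift_of]
        have h1 : f i = k := by simp [hf]
        have h2 : f j = l := by simp [hf, Ne.symm hij]
        rw [h1, h2]
      rwa [heq] at this
  -- the subgroup T = H ∪ gen 0 • H
  have hT : ∀ x : FP, x ∈ H ∨ gen 0 * x ∈ H := by
    intro x
    induction x using Monoid.CoprodI.induction_on with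
    | one => exact Or.inl H.one_mem
    | of i m =>
        have : m = 1 ∨ m = Multiplicative.ofAdd 1 := by revert m; decide
        rcases this with rfl | rfl
        · rw [map_one]; exact Or.inl H.one_mem
        · exact Or.inr (hpair 0 i)
    | mul x y hx hy =>
        rcases hx with hx | hx
        · rcases hy with hy | hy
          · exact Or.inl (H.mul_mem hx hy)
          · refine Or.inr ?_
            have h1 : gen 0 * x * gen 0 ∈ H := hinv.2 0 x hx
            have := H.mul_mem h1 hy
            have heq : (gen 0 * x * gen 0) * (gen 0 * y) = gen 0 * (x * y) := by
              have := gen_sq 0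
              rw [mul_assoc (gen 0 * x), ← mul_assoc (gen 0) (gen 0) y, this, one_mul, mul_assoc]
            rwa [heq] at this
        · rcases hy with hy | hy
          · exact Or.inr (by rw [← mul_assoc]; exact H.mul_mem hx hy)
          · refine Or.inl ?_
            have h1 : gen 0 * (gen 0 * x) * gen 0 ∈ H := hinv.2 0 _ hx
            have := H.mul_mem h1 hy
            have heq : (gen 0 * (gen 0 * x) * gen 0) * (gen 0 * y) = x * y := by
              have hs := gen_sq 0
              rw [← mul_assoc (gen 0) (gen 0) x, hs, one_mul, mul_assoc x,
                ← mul_assoc (gen 0) (gen 0) y, hs, one_mul]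
            rwa [heq] at this
  apply le_antisymm hle
  intro x hx
  rcases hT x with hx' | hx'
  · exact hx'
  · exfalso
    have h1 : par (gen 0 * x) = 1 := hle hx'
    have h2 : par x = 1 := hx
    rw [map_mul, h2, mul_one] at h1
    have : par (gen 0) = Multiplicative.ofAdd (1 : ZMod 2) := by
      simp [par, gen, Monoid.CoprodI.lift_of]
    rw [this] at h1
    exact absurd h1 (by decide)

end
end

section
/- The elements x_k := a_1 a_{k+1}, for k = 1, 2, ..., form a free basis of the subgroup E of even-length words in G = Z_2^{*∞}; in particular E is isomorphic to the free group on countably many generators. -/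
noncomputable section

namespace Stmt6Aux

open SemidirectProduct

abbrev Fgp := FreeGroup ℕ

def σ : Z2 := Multiplicative.ofAdd 1

lemma z2cases (x : Z2) : x = 1 ∨ x = σ := by revert x; decide

lemma sigma_mul : σ * σ = 1 := by decide

lemma z2_hom_ext {H : Type*} [Monoid H] {f g : Z2 →* H}
    (h : f σ = g σ) : f = g := by
  refine MonoidHom.ext fun x => ?_
  rcases z2cases x with rfl | rfl
  · simp
  · exact h

def homOfOrderTwo {H : Type*} [Monoid H] (h : H) (hh : h * h = 1) : Z2 →* H where
  toFun x := if x = 1 then 1 else h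
  map_one' := if_pos rfl
  map_mul' x y := by
    rcases z2cases x with rfl | rfl <;> rcases z2cases y with rfl | rfl <;>
      simp [sigma_mul, hh, show σ ≠ 1 by decide]

lemma homOfOrderTwo_apply {H : Type*} [Monoid H] (h : H) (hh : h * h = 1) :
    homOfOrderTwo h hh σ = h := by
  simp [homOfOrderTwo, show σ ≠ 1 by decide]

def negHom : Fgp →* Fgp := FreeGroup.lift (fun k => (FreeGroup.of k)⁻¹)

@[simp] lemma negHom_of (k : ℕ) : negHom (FreeGroup.of k) = (FreeGroup.of k)⁻¹ :=
  FreeGroup.lift_apply_of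

lemma negHom_negHom (x : Fgp) : negHom (negHom x) = x := by
  have h : negHom.comp negHom = MonoidHom.id Fgp :=
    FreeGroup.ext_hom _ _ (fun a => by simp)
  calc negHom (negHom x) = (negHom.comp negHom) x := rfl
  _ = x := by rw [h]; rfl

def e : Fgp ≃* Fgp where
  toFun := negHom
  invFun := negHom
  left_inv := negHom_negHom
  right_inv := negHom_negHom
  map_mul' := map_mul negHom

lemma e_sq : (e * e : MulAut Fgp) = 1 :=
  MulEquiv.ext fun x => negHom_negHom x

def φm : Z2 →* MulAut Fgp := homOfOrderTwo e e_sq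

lemma phi_sigma : φm σ = e := homOfOrderTwo_apply _ _

abbrev Hsd := SemidirectProduct Fgp Z2 φm

def wi : ℕ → Fgp
  | 0 => 1
  | k + 1 => (FreeGroup.of k)⁻¹

lemma negHom_wi (i : ℕ) : negHom (wi i) = (wi i)⁻¹ := by
  cases i with
  | zero => simp [wi]
  | succ k => simp [wi]

def elt (i : ℕ) : Hsd := inl (wi i) * inr σ

lemma elt_sq (i : ℕ) : elt i * elt i = 1 := by
  ext
  · simp [elt, phi_sigma, sigma_mul, negHom_wi, e]
  · simp [elt, sigma_mul]

def ψ : FP →* Hsd := Monoid.CoprodI.lift (fun i => homOfOrderTwo (elt i) (elt_sq i))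

lemma psi_gen (i : ℕ) : ψ (gen i) = elt i := by
  rw [gen, ψ, Monoid.CoprodI.lift_of]
  exact homOfOrderTwo_apply _ _

def L : Fgp →* FP := FreeGroup.lift (fun k : ℕ => gen 0 * gen (k + 1))

@[simp] lemma L_of (k : ℕ) : L (FreeGroup.of k) = gen 0 * gen (k + 1) := FreeGroup.lift_apply_of

lemma gen_sq (i : ℕ) : gen i * gen i = 1 := by
  rw [gen, ← map_mul, show (Multiplicative.ofAdd (1 : ZMod 2)) * Multiplicative.ofAdd 1 = 1 by
    decide, map_one]

lemma gen_inv (i : ℕ) : (gen i)⁻¹ = gen i := inv_eq_of_mul_eq_one_right (gen_sq i)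

def R : Z2 →* FP := homOfOrderTwo (gen 0) (gen_sq 0)

lemma compat : ∀ g : Z2, L.comp (φm g).toMonoidHom = (MulAut.conj (R g)).toMonoidHom.comp L := by
  intro g
  rcases z2cases g with rfl | rfl
  · ext x
    simp [R, homOfOrderTwo]
  · apply FreeGroup.ext_hom
    intro k
    simp only [MonoidHom.comp_apply, MulEquiv.coe_toMonoidHom, phi_sigma, R,
      homOfOrderTwo_apply, MulAut.conj_apply]
    show L (negHom (FreeGroup.of k)) = gen 0 * L (FreeGroup.of k) * (gen 0)⁻¹
    rw [negHom_of, map_inv, L_of, gen_inv, mul_inv_rev, gen_inv, gen_inv]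
    rw [← mul_assoc (gen 0) (gen 0), gen_sq, one_mul]

def χ : Hsd →* FP := SemidirectProduct.lift L R compat

lemma psi_L : ψ.comp L = inl := by
  apply FreeGroup.ext_hom
  intro k
  simp only [MonoidHom.comp_apply, L_of, map_mul, psi_gen]
  ext
  · simp [elt, wi, phi_sigma, e, sigma_mul]
  · simp [elt, sigma_mul]

lemma chi_psi (x : FP) : χ (ψ x) = x := by
  have h : χ.comp ψ = MonoidHom.id FP := by
    apply Monoid.CoprodI.ext_hom
    intro i
    apply z2_hom_ext
    show χ (ψ (gen i)) = gen i
    rw [psi_gen, elt, map_mul]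
    show χ (inl (wi i)) * χ (inr σ) = gen i
    rw [χ, SemidirectProduct.lift_inl, SemidirectProduct.lift_inr, R, homOfOrderTwo_apply]
    cases i with
    | zero => simp [wi]
    | succ k =>
      rw [wi, map_inv, L_of, mul_inv_rev, gen_inv, gen_inv, mul_assoc, gen_sq, mul_one]
  calc χ (ψ x) = (χ.comp ψ) x := rfl
  _ = x := by rw [h]; rfl

lemma par_gen (i : ℕ) : par (gen i) = σ := by
  rw [gen, par, Monoid.CoprodI.lift_of]; rfl

lemma rightHom_psi (x : FP) : rightHom (ψ x) = par x := by
  have h : (rightHom : Hsd →* Z2).comp ψ = par := by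
    apply Monoid.CoprodI.ext_hom
    intro i
    apply z2_hom_ext
    show rightHom (ψ (gen i)) = par (gen i)
    rw [psi_gen, par_gen, elt, map_mul, rightHom_inl, rightHom_inr, one_mul]
  calc rightHom (ψ x) = ((rightHom : Hsd →* Z2).comp ψ) x := rfl
  _ = par x := by rw [h]

end Stmt6Aux

/-- The elements `x_k = a₁ a_{k+1}` form a free basis of the even-length subgroup `Ev`:
the homomorphism from the free group on countably many generators sending the `k`-th
generator to `x_k` is injective with range `Ev`. In particular `Ev` is free on
countably many generators. -/
theorem stmt6 :
    Function.Injective (FreeGroup.lift (fun k : ℕ => gen 0 * gen (k + 1)) : FreeGroup ℕ →* FP) ∧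
    (FreeGroup.lift (fun k : ℕ => gen 0 * gen (k + 1)) : FreeGroup ℕ →* FP).range = Ev := by
    open Stmt6Aux SemidirectProduct in
  constructor
  · show Function.Injective (L : Fgp →* FP)
    intro a b hab
    apply inl_injective (φ := φm)
    have := congrArg ψ hab
    calc (inl a : Hsd) = ψ.comp L a := by rw [psi_L]
    _ = ψ.comp L b := by simpa using this
    _ = inl b := by rw [psi_L]
  · show (L : Fgp →* FP).range = Ev
    ext x
    constructor
    · rintro ⟨w, rfl⟩
      show par (L w) = 1
      have h : par.comp L = 1 := by
        apply FreeGroup.ext_hom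
        intro k
        simp [par_gen, sigma_mul]
      calc par (L w) = (par.comp L) w := rfl
      _ = 1 := by rw [h]; rfl
    · intro hx
      have hx' : par x = 1 := hx
      have h1 : rightHom (ψ x) = 1 := by rw [rightHom_psi, hx']
      have h2 : ψ x ∈ (inl : Fgp →* Hsd).range := by
        rw [range_inl_eq_ker_rightHom]; exact h1
      obtain ⟨w, hw⟩ := h2
      refine ⟨w, ?_⟩
      have : χ (inl w) = L w := SemidirectProduct.lift_inl _ _ _ _
      calc L w = χ (inl w) := this.symm
      _ = χ (ψ x) := by rw [hw]
      _ = x := chi_psi x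

end
end

section
/- Every S-invariant subgroup H of F_∞ is generated, as an S-invariant subgroup, by the element x_1^s together with H ∩ [F_∞, F_∞], where s is the minimal positive integer with x_1^s ∈ H (if no such integer exists, by H ∩ [F_∞, F_∞] alone). That is, H is the smallest S-invariant subgroup containing x_1^s and H ∩ [F_∞,F_∞]. -/
noncomputable section

abbrev F : Type := FreeGroup ℕ

/-- `f` moves only finitely many letters. -/
def FinSuppF (f : ℕ → ℕ) : Prop := ∃ n, ∀ k ≥ n, f k = k

/-- The endomorphism of `F` identifying letters according to `f`. -/
def identF (f : ℕ → ℕ) : Monoid.End F :=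
  (FreeGroup.lift (fun k => FreeGroup.of (f k)) : F →* F)

/-- The endomorphism `x_k ↦ x_i⁻¹ x_k`. -/
def shiftF (i : ℕ) : Monoid.End F :=
  (FreeGroup.lift (fun k => (FreeGroup.of i)⁻¹ * FreeGroup.of k) : F →* F)

/-- The endomorphism deleting the letter `j` (sending `x_j` to `1`). -/
def delF (j : ℕ) : Monoid.End F :=
  (FreeGroup.lift (fun k => if k = j then 1 else FreeGroup.of k) : F →* F)

/-- The endomorphism `x_k ↦ x_k⁻¹` for all `k`. -/
def invF : Monoid.End F :=
  (FreeGroup.lift (fun k => (FreeGroup.of k)⁻¹) : F →* F)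

/-- The generating set of the semigroup `S ⊆ End(F_∞)`: finite identifications of
letters, the maps `x_k ↦ x_i⁻¹ x_k`, deletions of letters, the global inversion
`x_k ↦ x_k⁻¹`, and all inner automorphisms. -/
def SGen : Set (Monoid.End F) :=
  {φ | (∃ f : ℕ → ℕ, FinSuppF f ∧ φ = identF f) ∨
       (∃ i : ℕ, φ = shiftF i) ∨
       (∃ j : ℕ, φ = delF j) ∨
       φ = invF ∨
       (∃ g : F, φ = ((MulAut.conj g : F ≃* F) : F →* F))}

/-- The semigroup `S` of endomorphisms of `F_∞`. -/
def S : Subsemigroup (Monoid.End F) := Subsemigroup.closure SGen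

/-- A subgroup is `S`-invariant if it is preserved by every element of `S`. -/
def SInv (H : Subgroup F) : Prop := ∀ φ ∈ S, ∀ x ∈ H, φ x ∈ H

/-- Exponent sum of the letter `i` in a word of `F`. -/
def expSum (i : ℕ) : F →* Multiplicative ℤ :=
  FreeGroup.lift (fun k => if k = i then Multiplicative.ofAdd (1 : ℤ) else 1)

-- ## auxiliary

/-- exponent sum as an integer -/
def Ei (i : ℕ) (x : F) : ℤ := Multiplicative.toAdd (expSum i x)

lemma expSum_of (i k : ℕ) :
    expSum i (FreeGroup.of k) = if k = i then Multiplicative.ofAdd (1 : ℤ) else 1 := by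
  simp [expSum]

lemma identF_mem (f : ℕ → ℕ) (hf : FinSuppF f) : identF f ∈ S :=
  Subsemigroup.subset_closure (Or.inl ⟨f, hf, rfl⟩)

lemma delF_mem (j : ℕ) : delF j ∈ S :=
  Subsemigroup.subset_closure (Or.inr (Or.inr (Or.inl ⟨j, rfl⟩)))

lemma invF_mem : invF ∈ S :=
  Subsemigroup.subset_closure (Or.inr (Or.inr (Or.inr (Or.inl rfl))))

lemma identF_of (f : ℕ → ℕ) (k : ℕ) : identF f (FreeGroup.of k) = FreeGroup.of (f k) := by
  exact FreeGroup.lift_apply_of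

lemma delF_of (j k : ℕ) :
    delF j (FreeGroup.of k) = if k = j then 1 else FreeGroup.of k := by
  exact FreeGroup.lift_apply_of

/-- two homomorphisms agree on `x` if they agree on the letters of `x` -/
lemma hom_eq_on {M : Type} [Group M] (φ ψ : F →* M) (x : F)
    (h : ∀ p ∈ x.toWord, φ (FreeGroup.of p.1) = ψ (FreeGroup.of p.1)) : φ x = ψ x := by
  have hφ : φ = FreeGroup.lift (fun a => φ (FreeGroup.of a)) := by
    ext a; rw [FreeGroup.lift_apply_of]
  have hψ : ψ = FreeGroup.lift (fun a => ψ (FreeGroup.of a)) := by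
    ext a; rw [FreeGroup.lift_apply_of]
  conv_lhs => rw [hφ, ← FreeGroup.mk_toWord (x := x)]
  conv_rhs => rw [hψ, ← FreeGroup.mk_toWord (x := x)]
  rw [FreeGroup.lift_mk, FreeGroup.lift_mk]
  congr 1
  apply List.map_congr_left
  intro p hp
  rw [h p hp]

/-- bound on the letters occurring in `x` -/
def bnd (x : F) : ℕ := ((x.toWord.map Prod.fst).toFinset.sup id) + 1

lemma lt_bnd (x : F) : ∀ p ∈ x.toWord, p.1 < bnd x := by
  intro p hp
  have : p.1 ∈ (x.toWord.map Prod.fst).toFinset := by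
    simp only [List.mem_toFinset, List.mem_map]
    exact ⟨p, hp, rfl⟩
  have := Finset.le_sup (f := id) this
  simpa [bnd, Nat.lt_succ_iff] using this

lemma expSum_high (x : F) {j : ℕ} (hj : bnd x ≤ j) : expSum j x = 1 := by
  have : expSum j x = (1 : F →* Multiplicative ℤ) x := by
    apply hom_eq_on
    intro p hp
    have : p.1 < bnd x := lt_bnd x p hp
    rw [expSum_of]
    simp only [MonoidHom.one_apply]
    rw [if_neg]
    omega
  simpa using this

lemma foldr_del_mem (js : List ℕ) :
    js.foldr (fun j φ => delF j * φ) (identF id) ∈ S := by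
  induction js with
  | nil => exact identF_mem id ⟨0, fun k _ => rfl⟩
  | cons j t ih => exact S.mul_mem (delF_mem j) ih

lemma foldr_del_of (js : List ℕ) (k : ℕ) :
    js.foldr (fun j φ => delF j * φ) (identF id) (FreeGroup.of k)
      = if k ∈ js then 1 else FreeGroup.of k := by
  induction js with
  | nil => simp [identF_of]
  | cons j t ih =>
    show delF j (t.foldr (fun j φ => delF j * φ) (identF id) (FreeGroup.of k)) = _
    rw [ih]
    by_cases hk : k ∈ t
    · simp [hk]
    · rw [if_neg hk, delF_of]
      by_cases hkj : k = j
      · simp [hkj]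
      · simp [hkj, hk]

/-- key lemma: for `x` in an `S`-invariant subgroup, `x_i ^ (Ei i x)` is in it too. -/
lemma pow_Ei_mem (K : Subgroup F) (hK : SInv K) (x : F) (hx : x ∈ K) (i : ℕ) :
    (FreeGroup.of i) ^ (Ei i x) ∈ K := by
  classical
  set js : List ℕ := (x.toWord.map Prod.fst).filter (fun k => k ≠ i) with hjs
  set D : Monoid.End F := js.foldr (fun j φ => delF j * φ) (identF id) with hD
  have hDx : D x = FreeGroup.lift (fun k => if k = i then FreeGroup.of i else 1) x := by
    apply hom_eq_on
    intro p hp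
    rw [hD]; erw [foldr_del_of]
    simp only [FreeGroup.lift_apply_of]
    by_cases hpi : p.1 = i
    · have : p.1 ∉ js := by simp [hjs, hpi]
      rw [if_neg this, if_pos hpi, hpi]
    · have : p.1 ∈ js := by
        simp only [hjs, List.mem_filter, List.mem_map, decide_eq_true_eq]
        exact ⟨⟨p, hp, rfl⟩, hpi⟩
      rw [if_pos this, if_neg hpi]
  have hfact : (FreeGroup.lift (fun k => if k = i then FreeGroup.of i else 1) : F →* F)
      = (zpowersHom F (FreeGroup.of i)).comp (expSum i) := by
    ext k
    simp only [MonoidHom.comp_apply, FreeGroup.lift_apply_of, expSum_of]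
    by_cases hk : k = i <;> simp [hk]
  have hmem := hK D (hD ▸ foldr_del_mem js) x hx
  rw [hDx, hfact] at hmem
  simpa [Ei] using hmem

/-- transfer powers between letters using the swap identification -/
lemma swap_transfer (K : Subgroup F) (hK : SInv K) (i j : ℕ) (t : ℤ)
    (h : (FreeGroup.of i) ^ t ∈ K) : (FreeGroup.of j) ^ t ∈ K := by
  have hfs : FinSuppF (Equiv.swap i j) :=
    ⟨max i j + 1, fun k hk => Equiv.swap_apply_of_ne_of_ne (by omega) (by omega)⟩
  have := hK (identF (Equiv.swap i j)) (identF_mem _ hfs) _ h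
  rw [map_zpow, identF_of] at this
  simpa using this


lemma mem_commutator_of_expSum (x : F) (h : ∀ i, expSum i x = 1) : x ∈ commutator F := by
  classical
  set β : F →* Multiplicative (ℕ →₀ ℤ) :=
    FreeGroup.lift (fun i => Multiplicative.ofAdd (Finsupp.single i (1 : ℤ))) with hβ
  -- each coordinate of β is expSum
  have hcoord : ∀ i : ℕ,
      (AddMonoidHom.toMultiplicative (Finsupp.applyAddHom (M := ℤ) i)).comp β = expSum i := by
    intro i
    ext k
    simp only [MonoidHom.comp_apply, hβ, FreeGroup.lift_apply_of, expSum, AddMonoidHom.toMultiplicative,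
      Finsupp.applyAddHom]
    by_cases hk : k = i <;>
      simp [hk, Finsupp.single_apply]
  have hβx : β x = 1 := by
    have : Multiplicative.toAdd (β x) = 0 := by
      ext i
      have := congrArg (fun φ : F →* Multiplicative ℤ => φ x) (hcoord i)
      simp only [MonoidHom.comp_apply] at this
      rw [h i] at this
      have h2 : Multiplicative.toAdd ((AddMonoidHom.toMultiplicative
          (Finsupp.applyAddHom (M := ℤ) i)) (β x)) = 0 := by rw [this]; rfl
      simpa [AddMonoidHom.toMultiplicative, Finsupp.applyAddHom] using h2
    calc β x = Multiplicative.ofAdd (Multiplicative.toAdd (β x)) := rfl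
    _ = Multiplicative.ofAdd 0 := by rw [this]
    _ = 1 := rfl
  -- factor the abelianization map through β
  set g : Multiplicative (ℕ →₀ ℤ) →* Abelianization F :=
    AddMonoidHom.toMultiplicativeLeft
      (Finsupp.liftAddHom (fun i =>
        zmultiplesHom (Additive (Abelianization F))
          (Additive.ofMul (Abelianization.of (FreeGroup.of i))))) with hg
  have hfac : g.comp β = (Abelianization.of : F →* Abelianization F) := by
    ext k
    simp only [MonoidHom.comp_apply, hβ, FreeGroup.lift_apply_of, hg]
    simp [AddMonoidHom.toMultiplicativeLeft, Finsupp.liftAddHom_apply_single]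
  have h1 : Abelianization.of x = 1 := by
    rw [← hfac]
    simp only [MonoidHom.comp_apply, hβx, map_one]
  exact (QuotientGroup.eq_one_iff x).mp h1


lemma list_range_prod {M : Type} [CommMonoid M] (n : ℕ) (g : ℕ → M) :
    ((List.range n).map g).prod = ∏ i ∈ Finset.range n, g i := by
  rw [Finset.prod_eq_multiset_prod]
  rfl

/-- main reduction: H is contained in any S-invariant K containing H ⊓ commutator
and the relevant powers. -/
lemma main_le (H K : Subgroup F) (hH : SInv H)
    (hcomm : H ⊓ commutator F ≤ K)
    (hpow : ∀ x ∈ H, ∀ i : ℕ, (FreeGroup.of i) ^ (Ei i x) ∈ K) :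
    H ≤ K := by
  intro x hx
  set n := bnd x with hn
  set w : F := ((List.range n).map (fun i => (FreeGroup.of i) ^ (Ei i x))).prod with hw
  have hwK : w ∈ K := by
    apply Subgroup.list_prod_mem
    intro a ha
    simp only [List.mem_map, List.mem_range] at ha
    obtain ⟨i, _, rfl⟩ := ha
    exact hpow x hx i
  have hwH : w ∈ H := by
    apply Subgroup.list_prod_mem
    intro a ha
    simp only [List.mem_map, List.mem_range] at ha
    obtain ⟨i, _, rfl⟩ := ha
    exact pow_Ei_mem H hH x hx i
  have hexp : ∀ j, expSum j w = expSum j x := by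
    intro j
    have h1 : expSum j w = ∏ i ∈ Finset.range n,
        (if i = j then Multiplicative.ofAdd (1:ℤ) else 1) ^ (Ei i x) := by
      rw [hw, map_list_prod, List.map_map, list_range_prod]
      congr 1
      funext i
      simp only [Function.comp_apply, map_zpow, expSum_of]
    by_cases hj : j < n
    · rw [h1]
      rw [Finset.prod_eq_single j]
      · have : expSum j x = Multiplicative.ofAdd (Ei j x) := rfl
        rw [this]
        simp [← ofAdd_zsmul]
      · intro i _ hij
        rw [if_neg hij, one_zpow]
      · intro hjn
        exact absurd (Finset.mem_range.mpr hj) hjn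
    · rw [h1]
      have h2 : expSum j x = 1 := expSum_high x (by omega)
      rw [h2, Finset.prod_eq_one]
      intro i hi
      rw [if_neg, one_zpow]
      rw [Finset.mem_range] at hi
      omega
  have hcx : x * w⁻¹ ∈ commutator F := by
    apply mem_commutator_of_expSum
    intro j
    rw [map_mul, map_inv, hexp j]
    group
  have hK1 : x * w⁻¹ ∈ K := hcomm ⟨H.mul_mem hx (H.inv_mem hwH), hcx⟩
  have hxeq : x = (x * w⁻¹) * w := by group
  rw [hxeq]
  exact K.mul_mem hK1 hwK

lemma pow0_mem (H : Subgroup F) (hH : SInv H) (x : F) (hx : x ∈ H) (i : ℕ) :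
    (FreeGroup.of 0 : F) ^ (Ei i x) ∈ H :=
  swap_transfer H hH i 0 _ (pow_Ei_mem H hH x hx i)

/-- Every `S`-invariant subgroup `H` of `F_∞` is generated, as an `S`-invariant
subgroup, by `x_1^s` (with `s` minimal such that `x_1^s ∈ H`) together with
`H ∩ [F_∞, F_∞]`; if no such `s` exists, by `H ∩ [F_∞, F_∞]` alone. -/
theorem stmt12 (H : Subgroup F) (hH : SInv H) :
    (∀ s : ℕ, 0 < s → (FreeGroup.of 0) ^ s ∈ H →
        (∀ t : ℕ, 0 < t → (FreeGroup.of 0) ^ t ∈ H → s ≤ t) →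
      H = sInf {K : Subgroup F |
        SInv K ∧ (FreeGroup.of 0) ^ s ∈ K ∧ (H ⊓ commutator F : Subgroup F) ≤ K}) ∧
    ((¬ ∃ s : ℕ, 0 < s ∧ (FreeGroup.of 0) ^ s ∈ H) →
      H = sInf {K : Subgroup F |
        SInv K ∧ (H ⊓ commutator F : Subgroup F) ≤ K}) := by
  constructor
  · intro s hspos hs hmin
    apply le_antisymm
    · apply le_sInf
      rintro K ⟨hK, hsK, hcK⟩
      apply main_le H K hH hcK
      intro x hx i
      have h0 : (FreeGroup.of 0 : F) ^ (Ei i x) ∈ H := pow0_mem H hH x hx i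
      have hdvd : (s : ℤ) ∣ Ei i x := by
        set E := Ei i x with hE
        have hsne : (s : ℤ) ≠ 0 := by exact_mod_cast hspos.ne'
        have h1 : (FreeGroup.of 0 : F) ^ ((s : ℤ) * (E / s)) ∈ H := by
          rw [zpow_mul]
          exact Subgroup.zpow_mem H (by rw [zpow_natCast]; exact hs) _
        have hr0 : (FreeGroup.of 0 : F) ^ (E % (s : ℤ)) ∈ H := by
          rw [Int.emod_def, zpow_sub]
          exact H.mul_mem h0 (H.inv_mem h1)
        by_contra hnd
        have hrnn : 0 ≤ E % (s : ℤ) := Int.emod_nonneg E hsne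
        have hrne : E % (s : ℤ) ≠ 0 := fun h => hnd (Int.dvd_of_emod_eq_zero h)
        have hrlt : E % (s : ℤ) < s := Int.emod_lt_of_pos E (by exact_mod_cast hspos)
        have htH : (FreeGroup.of 0 : F) ^ ((E % (s : ℤ)).toNat) ∈ H := by
          rw [← zpow_natCast, Int.toNat_of_nonneg hrnn]
          exact hr0
        have := hmin _ (by omega) htH
        omega
      obtain ⟨m, hm⟩ := hdvd
      rw [hm, zpow_mul]
      apply Subgroup.zpow_mem
      have hsK' : (FreeGroup.of 0 : F) ^ ((s : ℤ)) ∈ K := by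
        rw [zpow_natCast]; exact hsK
      exact swap_transfer K hK 0 i _ hsK'
    · exact sInf_le ⟨hH, hs, inf_le_left⟩
  · intro hns
    apply le_antisymm
    · apply le_sInf
      rintro K ⟨hK, hcK⟩
      apply main_le H K hH hcK
      intro x hx i
      have h0 : (FreeGroup.of 0 : F) ^ (Ei i x) ∈ H := pow0_mem H hH x hx i
      have hE : Ei i x = 0 := by
        set E := Ei i x with hE
        by_contra hne
        rcases lt_or_gt_of_ne hne with hlt | hgt
        · have hinv : (FreeGroup.of 0 : F) ^ (-E) ∈ H := by
            have := hH invF invF_mem _ h0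
            rw [map_zpow] at this
            have hof : invF (FreeGroup.of 0) = (FreeGroup.of 0 : F)⁻¹ :=
              FreeGroup.lift_apply_of
            rw [hof, inv_zpow, ← zpow_neg] at this
            exact this
          exact hns ⟨(-E).toNat, by omega, by
            rw [← zpow_natCast, Int.toNat_of_nonneg (by omega)]; exact hinv⟩
        · exact hns ⟨E.toNat, by omega, by
            rw [← zpow_natCast, Int.toNat_of_nonneg (by omega)]; exact h0⟩
      rw [hE, zpow_zero]
      exact K.one_mem
    · exact sInf_le ⟨hH, inf_le_left⟩
end
end
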